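/- arXiv:1008.0588 — 3 statements merged into one kernel-verified Lean document; each statement's English description precedes it below -/
import Mathlib

section
/- The point K = (8t²/(1+4t²), 4t/(1+4t²)) lies on the circle x² + y² - 2x = 0 and on the line (a - 2t)x - (1 + 2at)y + 4t = 0 for every real a. Hence the lines AA₀, BB₀, CC₀ (obtained by substituting parameters a, b, c) all pass through K. -/
/-- The point `K = (8t²/(1+4t²), 4t/(1+4t²))` lies on the circle
`x² + y² - 2x = 0`, and satisfies the line equation
`(u - 2t)x - (1 + 2ut)y + 4t = 0` for every real parameter `u`; hence the
lines `AA₀`, `BB₀`, `CC₀` (for parameters `a`, `b`, `c`) all pass through `K`. -/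
theorem lines_concur_at_K (t : ℝ) :
    ((8 * t ^ 2 / (1 + 4 * t ^ 2)) ^ 2 + (4 * t / (1 + 4 * t ^ 2)) ^ 2
        - 2 * (8 * t ^ 2 / (1 + 4 * t ^ 2)) = 0) ∧
    (∀ u : ℝ, (u - 2 * t) * (8 * t ^ 2 / (1 + 4 * t ^ 2))
        - (1 + 2 * u * t) * (4 * t / (1 + 4 * t ^ 2)) + 4 * t = 0) := by
  have h : (1 + 4 * t ^ 2) ≠ 0 := by positivity
  constructor
  · field_simp; ring
  · intro u; field_simp; ring
end

section
/- Triangle A₀B₀C₀, the image of triangle ABC under a direct similarity centered at a point J on the circumcircle of ABC, is in perspective with ABC: the lines AA₀, BB₀, CC₀ are concurrent. -/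
open Complex in
private lemma perspector_mem_line (J O X : ℂ) (r : ℝ) (α : ℂ) (hα1 : α ≠ 1)
    (hu : (J - O) * (starRingEnd ℂ) (J - O) = (r : ℂ) ^ 2)
    (hv : (X - O) * (starRingEnd ℂ) (X - O) = (r : ℂ) ^ 2)
    (hne : X ≠ J + α * (X - J)) :
    J + (J - O) * (α - (starRingEnd ℂ) α) / ((starRingEnd ℂ) α - 1) ∈
      affineSpan ℝ ({X, J + α * (X - J)} : Set ℂ) := by
  set K : ℂ := J + (J - O) * (α - (starRingEnd ℂ) α) / ((starRingEnd ℂ) α - 1) with hK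
  set X₀ : ℂ := J + α * (X - J) with hX₀
  have hα1' : α - 1 ≠ 0 := sub_ne_zero.mpr hα1
  have hβ1 : (starRingEnd ℂ) α - 1 ≠ 0 := by
    intro h
    apply hα1
    have := congrArg (starRingEnd ℂ) (sub_eq_zero.mp h)
    simpa using this
  have hd : X₀ - X ≠ 0 := sub_ne_zero.mpr (Ne.symm hne)
  have hd' : (starRingEnd ℂ) (X₀ - X) ≠ 0 := by
    intro h
    exact hd (by simpa using congrArg (starRingEnd ℂ) h)
  have hu' : (J - O) * ((starRingEnd ℂ) J - (starRingEnd ℂ) O) = (r : ℂ) ^ 2 := by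
    rw [← map_sub]; exact hu
  have hv' : (X - O) * ((starRingEnd ℂ) X - (starRingEnd ℂ) O) = (r : ℂ) ^ 2 := by
    rw [← map_sub]; exact hv
  set z : ℂ := (K - X) / (X₀ - X) with hz
  have hzc : (starRingEnd ℂ) z = z := by
    rw [hz, map_div₀, div_eq_div_iff hd' hd, hK, hX₀]
    simp only [map_sub, map_add, map_mul, map_div₀, Complex.conj_conj, map_one]
    field_simp
    linear_combination ((starRingEnd ℂ) α - 1) * (α - 1) * (α - (starRingEnd ℂ) α) * (hu' - hv')
  have hzr : (z.re : ℂ) = z := Complex.conj_eq_iff_re.mp hzc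
  have hKX : (z.re : ℂ) * (X₀ - X) + X = K := by
    rw [hzr, hz, div_mul_cancel₀ _ hd]; ring
  have := smul_vsub_vadd_mem_affineSpan_pair (z.re) X X₀
  simpa [hKX, Complex.real_smul] using this

/-- If `J` lies on the circumcircle of a nondegenerate triangle `ABC` (in the
plane, identified with `ℂ`) and `σ : z ↦ J + α(z - J)` (`α ≠ 0`, `α ≠ 1`) is a
nontrivial direct similarity centered at `J`, then triangle `A₀B₀C₀ = σ(ABC)`
is in perspective with `ABC`: the lines `AA₀`, `BB₀`, `CC₀` are concurrent. -/
theorem perspective_of_direct_similarity (A B C J : ℂ) (O : ℂ) (r : ℝ)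
    (hABC : ¬ Collinear ℝ ({A, B, C} : Set ℂ))
    (hA : dist A O = r) (hB : dist B O = r) (hC : dist C O = r)
    (hJ : dist J O = r) (α : ℂ) (hα0 : α ≠ 0) (hα1 : α ≠ 1)
    (A₀ B₀ C₀ : ℂ) (hA₀ : A₀ = J + α * (A - J)) (hB₀ : B₀ = J + α * (B - J))
    (hC₀ : C₀ = J + α * (C - J))
    (hAA : A ≠ A₀) (hBB : B ≠ B₀) (hCC : C ≠ C₀)
    (hl₁ : affineSpan ℝ ({A, A₀} : Set ℂ) ≠ affineSpan ℝ ({B, B₀} : Set ℂ))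
    (hl₂ : affineSpan ℝ ({B, B₀} : Set ℂ) ≠ affineSpan ℝ ({C, C₀} : Set ℂ))
    (hl₃ : affineSpan ℝ ({A, A₀} : Set ℂ) ≠ affineSpan ℝ ({C, C₀} : Set ℂ)) :
    ∃ K : ℂ, K ∈ affineSpan ℝ ({A, A₀} : Set ℂ) ∧
      K ∈ affineSpan ℝ ({B, B₀} : Set ℂ) ∧
      K ∈ affineSpan ℝ ({C, C₀} : Set ℂ) := by
  have circ : ∀ X : ℂ, dist X O = r → (X - O) * (starRingEnd ℂ) (X - O) = (r : ℂ) ^ 2 := by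
    intro X hX
    rw [Complex.mul_conj, ← Complex.sq_norm]
    rw [Complex.dist_eq] at hX
    rw [hX]
    push_cast
    ring
  refine ⟨J + (J - O) * (α - (starRingEnd ℂ) α) / ((starRingEnd ℂ) α - 1), ?_, ?_, ?_⟩
  · rw [hA₀]
    exact perspector_mem_line J O A r α hα1 (circ J hJ) (circ A hA) (hA₀ ▸ hAA)
  · rw [hB₀]
    exact perspector_mem_line J O B r α hα1 (circ J hJ) (circ B hB) (hB₀ ▸ hBB)
  · rw [hC₀]
    exact perspector_mem_line J O C r α hα1 (circ J hJ) (circ C hC) (hC₀ ▸ hCC)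
end

section
/- The circumcircle Σ₀ of triangle A₀B₀C₀ (the image of ABC under the direct similarity σ centered at J) meets the circumcircle Σ of ABC at J and at the perspector K of the two triangles. -/
open Complex

private lemma mem_pair_span (p p₁ p₂ : ℂ) (h : p ∈ affineSpan ℝ ({p₁, p₂} : Set ℂ)) :
    ∃ s : ℝ, (s : ℂ) * (p₂ - p₁) + p₁ = p := by
  have h2 : p -ᵥ p₁ ∈ vectorSpan ℝ ({p₁, p₂} : Set ℂ) := by
    rw [← direction_affineSpan]
    exact AffineSubspace.vsub_mem_direction h (left_mem_affineSpan_pair ℝ p₁ p₂)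
  obtain ⟨s, hs⟩ := mem_vectorSpan_pair_rev.mp h2
  refine ⟨s, ?_⟩
  simp only [vsub_eq_sub, Complex.real_smul] at hs
  linear_combination hs

private lemma circ_aux (A J O : ℂ) (h : ‖A - O‖ = ‖J - O‖) :
    (A - J) * (starRingEnd ℂ) (A - J)
      = (A - J) * (starRingEnd ℂ) (O - J) + (starRingEnd ℂ) (A - J) * (O - J) := by
  have h1 : (A - O) * (starRingEnd ℂ) (A - O) = (J - O) * (starRingEnd ℂ) (J - O) := by
    rw [Complex.mul_conj, Complex.mul_conj]
    norm_cast
    rw [← Complex.sq_norm, ← Complex.sq_norm, h]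
  simp only [map_sub] at h1 ⊢
  linear_combination h1

/-- The circumcircle `Σ₀` of `A₀B₀C₀` (the image of triangle `ABC` under a
direct similarity `σ : z ↦ J + α(z - J)`, `α ≠ 0`, `α ≠ 1`, centered at a point
`J` of the circumcircle `Σ` of `ABC`) meets `Σ` at `J` and at the perspector
`K` of the two triangles: `Σ₀` has center `σ(O)` and radius `|α| r`, and both
`J` and `K` lie on `Σ` and on `Σ₀`. -/
theorem circumcircles_meet_at_J_and_K (A B C J : ℂ) (O : ℂ) (r : ℝ)
    (hABC : ¬ Collinear ℝ ({A, B, C} : Set ℂ))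
    (hA : dist A O = r) (hB : dist B O = r) (hC : dist C O = r)
    (hJ : dist J O = r) (α : ℂ) (hα0 : α ≠ 0) (hα1 : α ≠ 1)
    (A₀ B₀ C₀ : ℂ) (hA₀ : A₀ = J + α * (A - J)) (hB₀ : B₀ = J + α * (B - J))
    (hC₀ : C₀ = J + α * (C - J)) (O₀ : ℂ) (hO₀ : O₀ = J + α * (O - J))
    (K : ℂ) (hK₁ : K ∈ affineSpan ℝ ({A, A₀} : Set ℂ))
    (hK₂ : K ∈ affineSpan ℝ ({B, B₀} : Set ℂ))
    (hK₃ : K ∈ affineSpan ℝ ({C, C₀} : Set ℂ))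
    (hKJ : K ≠ J) :
    dist J O₀ = ‖α‖ * r ∧ dist K O = r ∧
      dist K O₀ = ‖α‖ * r := by
  have hβ : (α - 1) ≠ 0 := sub_ne_zero.mpr hα1
  obtain ⟨s, hs⟩ := mem_pair_span K A A₀ hK₁
  obtain ⟨t, ht⟩ := mem_pair_span K B B₀ hK₂
  obtain ⟨u, hu⟩ := mem_pair_span K C C₀ hK₃
  -- circle conditions
  have habsA : ‖A - O‖ = ‖J - O‖ := by
    rw [← Complex.dist_eq, ← Complex.dist_eq, hA, hJ]
  have habsB : ‖B - O‖ = ‖J - O‖ := by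
    rw [← Complex.dist_eq, ← Complex.dist_eq, hB, hJ]
  have habsC : ‖C - O‖ = ‖J - O‖ := by
    rw [← Complex.dist_eq, ← Complex.dist_eq, hC, hJ]
  have hca := circ_aux A J O habsA
  have hcb := circ_aux B J O habsB
  have hcc := circ_aux C J O habsC
  -- the E equations
  have hEa : (K - J) * (starRingEnd ℂ) (A - J) * (starRingEnd ℂ) (α - 1)
      - (starRingEnd ℂ) (K - J) * (A - J) * (α - 1)
      = (A - J) * (starRingEnd ℂ) (A - J) * ((starRingEnd ℂ) (α - 1) - (α - 1)) := by
    rw [← hs, hA₀]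
    simp only [map_add, map_sub, map_mul, map_one, Complex.conj_ofReal]
    ring
  have hEb : (K - J) * (starRingEnd ℂ) (B - J) * (starRingEnd ℂ) (α - 1)
      - (starRingEnd ℂ) (K - J) * (B - J) * (α - 1)
      = (B - J) * (starRingEnd ℂ) (B - J) * ((starRingEnd ℂ) (α - 1) - (α - 1)) := by
    rw [← ht, hB₀]
    simp only [map_add, map_sub, map_mul, map_one, Complex.conj_ofReal]
    ring
  have hEc : (K - J) * (starRingEnd ℂ) (C - J) * (starRingEnd ℂ) (α - 1)
      - (starRingEnd ℂ) (K - J) * (C - J) * (α - 1)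
      = (C - J) * (starRingEnd ℂ) (C - J) * ((starRingEnd ℂ) (α - 1) - (α - 1)) := by
    rw [← hu, hC₀]
    simp only [map_add, map_sub, map_mul, map_one, Complex.conj_ofReal]
    ring
  -- the vector w
  set w : ℂ := (K - J) * (starRingEnd ℂ) (α - 1)
      - (O - J) * ((starRingEnd ℂ) (α - 1) - (α - 1)) with hwdef
  have hw' : (starRingEnd ℂ) w = (starRingEnd ℂ) (K - J) * (α - 1)
      - (starRingEnd ℂ) (O - J) * ((α - 1) - (starRingEnd ℂ) (α - 1)) := by
    rw [hwdef]
    simp only [map_sub, map_mul, Complex.conj_conj]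
  have hwa : w * (starRingEnd ℂ) (A - J) = (starRingEnd ℂ) w * (A - J) := by
    rw [hw', hwdef]
    linear_combination hEa + ((starRingEnd ℂ) (α - 1) - (α - 1)) * hca
  have hwb : w * (starRingEnd ℂ) (B - J) = (starRingEnd ℂ) w * (B - J) := by
    rw [hw', hwdef]
    linear_combination hEb + ((starRingEnd ℂ) (α - 1) - (α - 1)) * hcb
  have hwc : w * (starRingEnd ℂ) (C - J) = (starRingEnd ℂ) w * (C - J) := by
    rw [hw', hwdef]
    linear_combination hEc + ((starRingEnd ℂ) (α - 1) - (α - 1)) * hcc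
  -- A ≠ J
  have hAJ : A ≠ J := by
    intro h
    exact hKJ (by rw [← hs, hA₀, h]; ring)
  have haz : A - J ≠ 0 := sub_ne_zero.mpr hAJ
  -- w = 0
  have hw0 : w = 0 := by
    by_contra hw
    apply hABC
    have hab : (starRingEnd ℂ) (A - J) * (B - J) = (starRingEnd ℂ) (B - J) * (A - J) := by
      have h0 : w * ((starRingEnd ℂ) (A - J) * (B - J) - (starRingEnd ℂ) (B - J) * (A - J)) = 0 := by
        linear_combination (B - J) * hwa - (A - J) * hwb
      rcases mul_eq_zero.mp h0 with h | h
      · exact absurd h hw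
      · exact sub_eq_zero.mp h
    have hac : (starRingEnd ℂ) (A - J) * (C - J) = (starRingEnd ℂ) (C - J) * (A - J) := by
      have h0 : w * ((starRingEnd ℂ) (A - J) * (C - J) - (starRingEnd ℂ) (C - J) * (A - J)) = 0 := by
        linear_combination (C - J) * hwa - (A - J) * hwc
      rcases mul_eq_zero.mp h0 with h | h
      · exact absurd h hw
      · exact sub_eq_zero.mp h
    have hns : (Complex.normSq (A - J) : ℂ) ≠ 0 := by
      simpa [Complex.normSq_eq_zero] using haz
    have hrealb : ((((starRingEnd ℂ) (A - J) * (B - J)).re : ℝ) : ℂ)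
        = (starRingEnd ℂ) (A - J) * (B - J) := by
      have hcj : (starRingEnd ℂ) ((starRingEnd ℂ) (A - J) * (B - J))
          = (starRingEnd ℂ) (A - J) * (B - J) := by
        rw [map_mul, Complex.conj_conj, mul_comm, hab]
      exact Complex.conj_eq_iff_re.mp hcj
    have hrealc : ((((starRingEnd ℂ) (A - J) * (C - J)).re : ℝ) : ℂ)
        = (starRingEnd ℂ) (A - J) * (C - J) := by
      have hcj : (starRingEnd ℂ) ((starRingEnd ℂ) (A - J) * (C - J))
          = (starRingEnd ℂ) (A - J) * (C - J) := by
        rw [map_mul, Complex.conj_conj, mul_comm, hac]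
      exact Complex.conj_eq_iff_re.mp hcj
    have hb2 : B - J = ((((starRingEnd ℂ) (A - J) * (B - J)).re / Complex.normSq (A - J) : ℝ) : ℂ)
        * (A - J) := by
      rw [Complex.ofReal_div, div_mul_eq_mul_div, eq_div_iff hns, hrealb, ← Complex.mul_conj]
      ring
    have hc2 : C - J = ((((starRingEnd ℂ) (A - J) * (C - J)).re / Complex.normSq (A - J) : ℝ) : ℂ)
        * (A - J) := by
      rw [Complex.ofReal_div, div_mul_eq_mul_div, eq_div_iff hns, hrealc, ← Complex.mul_conj]
      ring
    rw [collinear_iff_exists_forall_eq_smul_vadd]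
    refine ⟨J, A - J, ?_⟩
    intro p hp
    rcases hp with h | h | h
    · refine ⟨1, ?_⟩
      simp only [h, vadd_eq_add, Complex.real_smul, Complex.ofReal_one]
      ring
    · refine ⟨(((starRingEnd ℂ) (A - J) * (B - J)).re / Complex.normSq (A - J) : ℝ), ?_⟩
      simp only [h, vadd_eq_add, Complex.real_smul]
      rw [← hb2]; ring
    · simp only [Set.mem_singleton_iff] at h
      refine ⟨(((starRingEnd ℂ) (A - J) * (C - J)).re / Complex.normSq (A - J) : ℝ), ?_⟩
      simp only [h, vadd_eq_add, Complex.real_smul]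
      rw [← hc2]; ring
  -- now w = 0
  have hwkey : (K - J) * (starRingEnd ℂ) (α - 1)
      = (O - J) * ((starRingEnd ℂ) (α - 1) - (α - 1)) := by
    rw [hwdef] at hw0
    linear_combination hw0
  have habsβ : ‖α - 1‖ ≠ 0 := norm_ne_zero_iff.mpr hβ
  have hrO : ‖O - J‖ = r := by
    rw [norm_sub_rev, ← Complex.dist_eq, hJ]
  refine ⟨?_, ?_, ?_⟩
  · -- dist J O₀
    rw [Complex.dist_eq, hO₀]
    have h1 : J - (J + α * (O - J)) = -(α * (O - J)) := by ring
    rw [h1, norm_neg, norm_mul, hrO]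
  · -- dist K O
    have h2 : (K - O) * (starRingEnd ℂ) (α - 1) = -((O - J) * (α - 1)) := by
      linear_combination hwkey
    have h3 := congrArg (‖·‖) h2
    rw [norm_mul, norm_neg, norm_mul, Complex.norm_conj, hrO] at h3
    rw [Complex.dist_eq]
    exact mul_right_cancel₀ habsβ h3
  · -- dist K O₀
    have h2 : (K - O₀) * (starRingEnd ℂ) (α - 1)
        = -((O - J) * (α - 1) * (starRingEnd ℂ) α) := by
      rw [hO₀]
      simp only [map_sub, map_one]
      simp only [map_sub, map_one] at hwkey
      linear_combination hwkey
    have h3 := congrArg (‖·‖) h2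
    rw [norm_mul, norm_neg, norm_mul, norm_mul, Complex.norm_conj, hrO, Complex.norm_conj] at h3
    rw [Complex.dist_eq]
    calc ‖K - O₀‖
        = ‖K - O₀‖ * ‖α - 1‖ / ‖α - 1‖ := by
          field_simp
      _ = ‖α‖ * r := by
          rw [h3]; field_simp
end
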